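/- Let c > 0 and let x* ∈ (0, 1/c) be the unique solution in (0,1/c) of e^{4cx}(1/c − x) = 1/c + x. Then for every y with x* < y ≤ 1/c there exists a unique x ∈ (0, y) satisfying e^{2cx}(1/c − x) = e^{−2cy}(1/c + x), and this solution satisfies x* < x < y. -/

import Mathlib

open Real

/-- One-step lemma for the boundary recursion: if `x* ∈ (0,1/c)` is the unique
solution there of `e^{4cx}(1/c − x) = 1/c + x`, then for every `y` with
`x* < y ≤ 1/c` there is a unique `x ∈ (0, y)` with
`e^{2cx}(1/c − x) = e^{−2cy}(1/c + x)`, and it satisfies `x* < x < y`. -/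
theorem stmt_3 (c xs : ℝ) (hc : 0 < c) (hxs : xs ∈ Set.Ioo 0 (1/c))
    (heq : Real.exp (4 * c * xs) * (1/c - xs) = 1/c + xs)
    (huniq : ∀ z ∈ Set.Ioo (0:ℝ) (1/c),
      Real.exp (4 * c * z) * (1/c - z) = 1/c + z → z = xs) :
    ∀ y : ℝ, xs < y → y ≤ 1/c →
      ∃ x : ℝ, x ∈ Set.Ioo 0 y ∧
        Real.exp (2 * c * x) * (1/c - x) = Real.exp (-(2 * c * y)) * (1/c + x) ∧
        (∀ z ∈ Set.Ioo (0:ℝ) y,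
          Real.exp (2 * c * z) * (1/c - z) = Real.exp (-(2 * c * y)) * (1/c + z) →
            z = x) ∧
        xs < x ∧ x < y := by
  intro y hxy hyu
  set u := 1/c with hu
  have hu0 : 0 < u := by positivity
  obtain ⟨hxs0, hxsu⟩ := hxs
  have hy0 : 0 < y := lt_trans hxs0 hxy
  have hcu : c * u = 1 := by rw [hu, mul_one_div_cancel hc.ne']
  set G : ℝ → ℝ := fun x => Real.exp (2*c*x) * (u - x) / (u + x) with hG
  have hden : ∀ x : ℝ, 0 ≤ x → 0 < u + x := fun x hx => by linarith
  have hderiv : ∀ x : ℝ, 0 ≤ x →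
      HasDerivAt G (-(2*c*x^2*Real.exp (2*c*x))/(u+x)^2) x := by
    intro x hx
    have hne : u + x ≠ 0 := (hden x hx).ne'
    have h1 : HasDerivAt (fun x : ℝ => Real.exp (2*c*x)) (2*c*Real.exp (2*c*x)) x := by
      have := ((hasDerivAt_id x).const_mul (2*c)).exp
      simpa [mul_comm] using this
    have h2 : HasDerivAt (fun x : ℝ => Real.exp (2*c*x) * (u - x))
        (2*c*Real.exp (2*c*x)*(u-x) + Real.exp (2*c*x)*(-1)) x :=
      h1.mul ((hasDerivAt_id x).const_sub u)
    have h3 : HasDerivAt (fun x : ℝ => u + x) 1 x := (hasDerivAt_id x).const_add u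
    have h4 := h2.div h3 hne
    have hnum : (2*c*Real.exp (2*c*x)*(u-x) + Real.exp (2*c*x)*(-1))*(u+x)
        - Real.exp (2*c*x)*(u-x)*1 = -(2*c*x^2*Real.exp (2*c*x)) := by
      linear_combination (2*Real.exp (2*c*x)*u) * hcu
    rw [← hnum]
    exact h4
  have hcont : ContinuousOn G (Set.Icc 0 u) := fun x hx =>
    ((hderiv x hx.1).continuousAt).continuousWithinAt
  have hanti : StrictAntiOn G (Set.Icc 0 u) := by
    apply strictAntiOn_of_deriv_neg (convex_Icc 0 u) hcont
    intro x hx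
    rw [interior_Icc] at hx
    rw [(hderiv x hx.1.le).deriv]
    have h1 : 0 < u + x := hden x hx.1.le
    have hx0 : 0 < x := hx.1
    have h2 : 0 < 2*c*x^2*Real.exp (2*c*x) := by positivity
    exact div_neg_of_neg_of_pos (by linarith) (pow_pos h1 2)
  -- key inequality for w in (xs, u]
  have hkey : ∀ w : ℝ, xs < w → w ≤ u → Real.exp (4*c*w) * (u - w) < u + w := by
    intro w hw1 hw2
    have hw0 : 0 < w := lt_trans hxs0 hw1
    rcases eq_or_lt_of_le hw2 with h | h
    · rw [h]; simp; linarith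
    · by_contra hcon
      push_neg at hcon
      rcases eq_or_lt_of_le hcon with he | hl
      · have := huniq w ⟨hw0, h⟩ he.symm
        linarith
      · have hgc : ContinuousOn (fun z : ℝ => Real.exp (4*c*z) * (u - z) - (u + z))
            (Set.Icc w u) := by fun_prop
        have hgu : Real.exp (4*c*u) * (u - u) - (u + u) < 0 := by
          simp; linarith
        have hgw : (0:ℝ) < Real.exp (4*c*w) * (u - w) - (u + w) := by linarith
        obtain ⟨z, hz, hgz⟩ := intermediate_value_Ioo' (le_of_lt h) hgc
          (Set.mem_Ioo.mpr ⟨hgu, hgw⟩)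
        simp only at hgz
        have hzeq : Real.exp (4*c*z) * (u - z) = u + z := by linarith
        have := huniq z ⟨lt_trans hw0 hz.1, hz.2⟩ hzeq
        linarith [hz.1]
  -- existence via IVT for G
  have hG0 : G 0 = 1 := by
    simp only [hG]
    simp [hu0.ne']
  set t := Real.exp (-(2*c*y)) with ht
  have ht1 : t < 1 := by
    rw [ht]
    have : 0 < 2*c*y := by positivity
    calc Real.exp (-(2*c*y)) < Real.exp 0 := Real.exp_lt_exp.mpr (by linarith)
    _ = 1 := Real.exp_zero
  have hGy : G y < t := by
    have hk := hkey y hxy hyu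
    have h2 := mul_lt_mul_of_pos_left hk (Real.exp_pos (-(2*c*y)))
    have h3 : Real.exp (-(2*c*y)) * (Real.exp (4*c*y) * (u - y)) =
        Real.exp (2*c*y) * (u - y) := by
      rw [← mul_assoc, ← Real.exp_add]; ring_nf
    rw [hG, ht]
    rw [div_lt_iff₀ (hden y hy0.le)]
    linarith [h2, h3]
  have hGycont : ContinuousOn G (Set.Icc 0 y) :=
    hcont.mono (Set.Icc_subset_Icc_right hyu)
  have htmem : t ∈ Set.Ioo (G y) (G 0) := ⟨hGy, by rw [hG0]; exact ht1⟩
  obtain ⟨x, hxmem, hGx⟩ := intermediate_value_Ioo' hy0.le hGycont htmem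
  have hxIcc : x ∈ Set.Icc 0 u := ⟨hxmem.1.le, le_trans hxmem.2.le hyu⟩
  have hnex : u + x ≠ 0 := (hden x hxmem.1.le).ne'
  refine ⟨x, hxmem, ?_, ?_, ?_, hxmem.2⟩
  · rw [hG, div_eq_iff hnex] at hGx
    linarith [hGx]
  · intro z hz hzeq
    have hnez : u + z ≠ 0 := (hden z hz.1.le).ne'
    have hGz : G z = t := by
      rw [hG, div_eq_iff hnez]
      linarith [hzeq]
    have hzIcc : z ∈ Set.Icc 0 u := ⟨hz.1.le, le_trans hz.2.le hyu⟩
    exact hanti.injOn hzIcc hxIcc (hGz.trans hGx.symm)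
  · -- xs < x
    have hnexs : u + xs ≠ 0 := (hden xs hxs0.le).ne'
    have hkey2 : Real.exp (-(2*c*xs)) * (u + xs) = Real.exp (2*c*xs) * (u - xs) := by
      rw [← heq, ← mul_assoc, ← Real.exp_add]
      ring_nf
    have hGxs : G xs = Real.exp (-(2*c*xs)) := by
      rw [hG, eq_comm, eq_div_iff hnexs]
      linarith [hkey2]
    have hcmp : G x < G xs := by
      rw [hGx, hGxs, ht]
      apply Real.exp_lt_exp.mpr
      nlinarith
    have hxsIcc : xs ∈ Set.Icc 0 u := ⟨hxs0.le, hxsu.le⟩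
    by_contra hcon
    push_neg at hcon
    rcases eq_or_lt_of_le hcon with he | hl
    · rw [he] at hcmp; exact lt_irrefl _ hcmp
    · exact absurd (hanti hxIcc hxsIcc hl) (by linarith)
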